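/- (Theorem 1, the paper's main theoretical result, stated with the labeling function in the hypothesis class.) Let X be a measurable space, let D_A and D_B be probability measures on X, and let H be a class of measurable functions from X to {0,1} such that the support collection of the symmetric-difference class HΔH = {x ↦ h(x) XOR h'(x) | h, h' ∈ H} has VC dimension at most d. Let f ∈ H be a labeling function, and for a probability measure D define the risk ε_D(h, f) = D({x | h(x) ≠ f(x)}). Let n be a positive integer, draw n i.i.d. samples from D_A and n i.i.d. samples from D_B (product measure D_A^n ⊗ D_B^n), and let D̂_A and D̂_B be the corresponding empirical measures. Then for every δ ∈ (0,1), with probability at least 1 − δ over the draw of the samples, simultaneously for all h ∈ H: |ε_{D_A}(h, f) − ε_{D_B}(h, f)| ≤ (1/2) · d_{HΔH}(D̂_A, D̂_B) + 2·√((d·log(2n) + log(2/δ))/n). -/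

import Mathlib

open MeasureTheory

/-- Support of a `{0,1}`-valued (here `Bool`-valued) function: preimage of `1` (`true`). -/
def support01 {X : Type*} (g : X → Bool) : Set X := g ⁻¹' {true}

/-- The `G`-divergence between two measures: twice the supremum over supports of
functions in `G` of the discrepancy of the measures. -/
noncomputable def Gdiv {X : Type*} [MeasurableSpace X] (G : Set (X → Bool))
    (D D' : Measure X) : ℝ :=
  2 * ⨆ g : G, |(D (support01 (g : X → Bool))).toReal -
      (D' (support01 (g : X → Bool))).toReal|

/-- Risk of a hypothesis `h` against a labeling function `f` under measure `D`. -/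
noncomputable def risk {X : Type*} [MeasurableSpace X] (D : Measure X)
    (h f : X → Bool) : ℝ :=
  (D {x | h x ≠ f x}).toReal

/-- The symmetric-difference class `HΔH = {x ↦ h(x) XOR h'(x) | h, h' ∈ H}`. -/
def symDiffClass {X : Type*} (H : Set (X → Bool)) : Set (X → Bool) :=
  {g | ∃ h ∈ H, ∃ h' ∈ H, g = fun x => Bool.xor (h x) (h' x)}

/-- A collection of subsets `𝒮` shatters a finite set `F` if every subset of `F`
arises as `F ∩ S` for some `S ∈ 𝒮`. -/
def Shatters {X : Type*} (𝒮 : Set (Set X)) (F : Finset X) : Prop :=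
  ∀ T ⊆ F, ∃ S ∈ 𝒮, (F : Set X) ∩ S = (T : Set X)

/-- The collection `𝒮` has VC dimension at most `d`: every shattered finite set
has cardinality at most `d`. -/
def VCDimLE {X : Type*} (𝒮 : Set (Set X)) (d : ℕ) : Prop :=
  ∀ F : Finset X, Shatters 𝒮 F → F.card ≤ d

/-- The empirical measure of the sample points `x 0, …, x (n-1)`, assigning mass
`1/n` to each sample point. -/
noncomputable def empMeasure {X : Type*} [MeasurableSpace X] {n : ℕ}
    (x : Fin n → X) : Measure X :=
  (n : ENNReal)⁻¹ • ∑ i, Measure.dirac (x i)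


open Real



/-- Hoeffding's lemma, Bernoulli case: `p e^t + (1-p) ≤ exp (p t + t²/8)`. -/
lemma bernoulli_mgf_le (p : ℝ) (hp0 : 0 ≤ p) (hp1 : p ≤ 1) (t : ℝ) :
    p * Real.exp t + (1 - p) ≤ Real.exp (p * t + t ^ 2 / 8) := by
  set q : ℝ := 1 - p with hq
  have hq0 : 0 ≤ q := by simp [hq]; linarith
  set g : ℝ → ℝ := fun u => p * Real.exp u + q with hgdef
  have hg : ∀ u, 0 < g u := by
    intro u
    rcases eq_or_lt_of_le hp0 with h | h
    · simp [hgdef, ← h, hq]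
    · have := Real.exp_pos u
      have : 0 < p * Real.exp u := by positivity
      simp only [hgdef]; linarith
  set M : ℝ → ℝ := fun u => p * Real.exp u / g u - p - u / 4 with hMdef
  have hgd : ∀ u, HasDerivAt g (p * Real.exp u) u := by
    intro u
    exact ((Real.hasDerivAt_exp u).const_mul p).add_const q
  have hMd : ∀ u, HasDerivAt M (p * Real.exp u * q / (g u) ^ 2 - 1 / 4) u := by
    intro u
    have h1 : HasDerivAt (fun u => p * Real.exp u) (p * Real.exp u) u :=
      (Real.hasDerivAt_exp u).const_mul p
    have h2 := (h1.div (hgd u) (hg u).ne')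
    have h3 : HasDerivAt (fun u => u / 4) (1 / 4) u := (hasDerivAt_id u).div_const 4
    have := (h2.sub_const p).sub h3
    refine this.congr_deriv ?_
    have hgu := (hg u).ne'
    field_simp
    ring
  have hM' : ∀ u, deriv M u ≤ 0 := by
    intro u
    rw [(hMd u).deriv]
    have hgu := hg u
    have key : 4 * (p * Real.exp u * q) ≤ (g u) ^ 2 := by
      have : (p * Real.exp u - q) ^ 2 ≥ 0 := sq_nonneg _
      have hgexp : g u = p * Real.exp u + q := rfl
      nlinarith
    have : p * Real.exp u * q / (g u) ^ 2 ≤ 1 / 4 := by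
      rw [div_le_div_iff₀ (by positivity) (by norm_num)]
      linarith
    linarith
  have hManti : Antitone M :=
    antitone_of_deriv_nonpos (fun u => (hMd u).differentiableAt) hM'
  have hM0 : M 0 = 0 := by
    have : g 0 = 1 := by simp [hgdef, hq]
    simp [hMdef, this]
  set L : ℝ → ℝ := fun u => Real.log (g u) - p * u - u ^ 2 / 8 with hLdef
  have hLd : ∀ u, HasDerivAt L (M u) u := by
    intro u
    have h1 : HasDerivAt (fun u => Real.log (g u)) (p * Real.exp u / g u) u :=
      (hgd u).log (hg u).ne'
    have h2 : HasDerivAt (fun u => p * u) p u := by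
      simpa using (hasDerivAt_id u).const_mul p
    have h3 : HasDerivAt (fun u => u ^ 2 / 8) (u / 4) u := by
      have := ((hasDerivAt_pow 2 u).div_const 8)
      refine this.congr_deriv ?_; norm_num; ring
    have := (h1.sub h2).sub h3
    exact this
  have hL0 : L 0 = 0 := by
    have : g 0 = 1 := by simp [hgdef, hq]
    simp [hLdef, this]
  have hLle : ∀ u, L u ≤ 0 := by
    intro u
    rcases le_total 0 u with h | h
    · have : AntitoneOn L (Set.Ici 0) := by
        apply antitoneOn_of_deriv_nonpos (convex_Ici 0)
        · exact (fun x _ => ((hLd x).differentiableAt).continuousAt.continuousWithinAt)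
        · exact fun x _ => ((hLd x).differentiableAt).differentiableWithinAt
        · intro x hx
          rw [(hLd x).deriv]
          rw [interior_Ici] at hx
          have : M x ≤ M 0 := hManti (le_of_lt hx)
          linarith [hM0 ▸ this]
      have := this (Set.self_mem_Ici) (Set.mem_Ici.2 h) h
      simpa [hL0] using this
    · have : MonotoneOn L (Set.Iic 0) := by
        apply monotoneOn_of_deriv_nonneg (convex_Iic 0)
        · exact (fun x _ => ((hLd x).differentiableAt).continuousAt.continuousWithinAt)
        · exact fun x _ => ((hLd x).differentiableAt).differentiableWithinAt
        · intro x hx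
          rw [(hLd x).deriv]
          rw [interior_Iic] at hx
          have : M 0 ≤ M x := hManti (le_of_lt hx)
          linarith [hM0 ▸ this]
      have := this (Set.mem_Iic.2 h) (Set.self_mem_Iic) h
      simpa [hL0] using this
  have := hLle t
  have hgt := hg t
  have : Real.log (g t) ≤ p * t + t ^ 2 / 8 := by simp only [hLdef] at this; linarith
  have := (Real.log_le_iff_le_exp hgt).1 this
  simpa [hgdef, hq] using this


/-- real-valued indicator -/
noncomputable def ind {X : Type*} (S : Set X) (x : X) : ℝ := S.indicator (fun _ => 1) x

lemma ind_nonneg {X : Type*} (S : Set X) (x : X) : 0 ≤ ind S x := by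
  unfold ind; by_cases h : x ∈ S <;> simp [h]

lemma ind_le_one {X : Type*} (S : Set X) (x : X) : ind S x ≤ 1 := by
  unfold ind; by_cases h : x ∈ S <;> simp [h]

lemma measurable_ind {X : Type*} [MeasurableSpace X] {S : Set X} (hS : MeasurableSet S) :
    Measurable (ind S) := Measurable.indicator measurable_const hS

lemma chernoff_up {X : Type*} [MeasurableSpace X] (D : Measure X) [IsProbabilityMeasure D]
    (S : Set X) (hS : MeasurableSet S) (n : ℕ) (hn : 0 < n) (s : ℝ) (hs : 0 < s) :
    (Measure.pi fun _ : Fin n => D)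
      {x | (D S).toReal + s ≤ (∑ i, ind S (x i)) / n} ≤
    ENNReal.ofReal (Real.exp (-2 * n * s ^ 2)) := by
  letI : MeasureSpace X := ⟨D⟩
  haveI : IsProbabilityMeasure (volume : Measure X) := inferInstanceAs (IsProbabilityMeasure D)
  set p := (D S).toReal with hpdef
  have hp0 : 0 ≤ p := ENNReal.toReal_nonneg
  have hp1 : p ≤ 1 := by
    have h1 : (D S) ≤ D Set.univ := measure_mono (Set.subset_univ S)
    have := ENNReal.toReal_mono (measure_ne_top D Set.univ) h1
    simpa [measure_univ] using this
  set t := 4 * s with htdef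
  have ht : 0 < t := by positivity
  set f1 : X → ℝ := fun y => Real.exp (t * ind S y) with hf1def
  have hf1eq : f1 = fun y => S.indicator (fun _ => Real.exp t - 1) y + 1 := by
    funext y
    by_cases hy : y ∈ S <;>
      simp [hf1def, ind, Set.indicator_of_mem, Set.indicator_of_notMem, hy]
  have hint : Integrable f1 D := by
    rw [hf1eq]
    exact ((integrable_const _).indicator hS).add (integrable_const 1)
  have hf1val : ∫ y, f1 y ∂D = p * Real.exp t + (1 - p) := by
    rw [hf1eq, integral_add ((integrable_const _).indicator hS) (integrable_const 1),
      integral_indicator_const _ hS, integral_const]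
    simp [measure_univ, smul_eq_mul, ← hpdef]
    change p * (rexp t - 1) + 1 = p * rexp t + (1 - p)
    ring
  have hf1nonneg : ∀ y, 0 ≤ f1 y := fun y => (Real.exp_pos _).le
  set F : (Fin n → X) → ℝ := fun x => ∏ i, f1 (x i) with hFdef
  have hFint : Integrable F (Measure.pi fun _ : Fin n => D) :=
    Integrable.fintype_prod (f := fun _ : Fin n => f1) (fun _ => hint)
  have hFval : ∫ x, F x ∂(Measure.pi fun _ : Fin n => D) = (p * Real.exp t + (1 - p)) ^ n := by
    rw [show (Measure.pi fun _ : Fin n => D) = (volume : Measure (Fin n → X)) from rfl]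
    have hf1val' : ∫ y, f1 y = p * Real.exp t + (1 - p) := hf1val
    erw [MeasureTheory.integral_fintype_prod_eq_pow (ι := Fin n) (μ := volume) f1, hf1val']
    simp
  have hFnonneg : ∀ x, 0 ≤ F x := fun x => Finset.prod_nonneg fun i _ => hf1nonneg _
  have hFmeas : Measurable F := by
    apply Finset.measurable_prod
    intro i _
    exact Real.measurable_exp.comp ((measurable_const.mul (measurable_ind hS)).comp
      (measurable_pi_apply i))
  set ε : ENNReal := ENNReal.ofReal (Real.exp (t * (n * (p + s)))) with hεdef
  have hεpos : ε ≠ 0 := by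
    simp [hεdef, ENNReal.ofReal_eq_zero, not_le, Real.exp_pos]
  have hεtop : ε ≠ ⊤ := ENNReal.ofReal_ne_top
  have hsub : {x : Fin n → X | (D S).toReal + s ≤ (∑ i, ind S (x i)) / n} ⊆
      {x | ε ≤ ENNReal.ofReal (F x)} := by
    intro x hx
    simp only [Set.mem_setOf_eq] at hx ⊢
    have hn' : (0:ℝ) < n := by exact_mod_cast hn
    have h1 : (p + s) * n ≤ ∑ i, ind S (x i) := by
      rw [← le_div_iff₀ hn']; exact hx
    have hFx : F x = Real.exp (t * ∑ i, ind S (x i)) := by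
      rw [hFdef]
      simp only [hf1def]
      rw [← Real.exp_sum, Finset.mul_sum]
    rw [hFx, hεdef]
    apply ENNReal.ofReal_le_ofReal
    apply Real.exp_le_exp.2
    have : n * (p + s) ≤ ∑ i, ind S (x i) := by linarith
    nlinarith
  have hmarkov := mul_meas_ge_le_lintegral₀ (μ := Measure.pi fun _ : Fin n => D)
    ((ENNReal.measurable_ofReal.comp hFmeas).aemeasurable) ε
  have hlint : ∫⁻ x, ENNReal.ofReal (F x) ∂(Measure.pi fun _ : Fin n => D) =
      ENNReal.ofReal ((p * Real.exp t + (1 - p)) ^ n) := by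
    rw [← hFval]
    exact (MeasureTheory.ofReal_integral_eq_lintegral_ofReal hFint
      (Filter.Eventually.of_forall hFnonneg)).symm
  have hmain : (Measure.pi fun _ : Fin n => D)
      {x | (D S).toReal + s ≤ (∑ i, ind S (x i)) / n} ≤
      ε⁻¹ * ENNReal.ofReal ((p * Real.exp t + (1 - p)) ^ n) := by
    calc (Measure.pi fun _ : Fin n => D) {x | (D S).toReal + s ≤ (∑ i, ind S (x i)) / n}
        ≤ (Measure.pi fun _ : Fin n => D) {x | ε ≤ ENNReal.ofReal (F x)} := measure_mono hsub
      _ = ε⁻¹ * (ε * (Measure.pi fun _ : Fin n => D) {x | ε ≤ ENNReal.ofReal (F x)}) := by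
          rw [← mul_assoc, ENNReal.inv_mul_cancel hεpos hεtop, one_mul]
      _ ≤ ε⁻¹ * ∫⁻ x, ENNReal.ofReal (F x) ∂(Measure.pi fun _ : Fin n => D) :=
          mul_le_mul_right hmarkov _
      _ = ε⁻¹ * ENNReal.ofReal ((p * Real.exp t + (1 - p)) ^ n) := by rw [hlint]
  refine hmain.trans ?_
  have hbase : (p * Real.exp t + (1 - p)) ^ n ≤ Real.exp ((n : ℝ) * (p * t + t ^ 2 / 8)) := by
    have h1 : p * Real.exp t + (1 - p) ≤ Real.exp (p * t + t ^ 2 / 8) :=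
      bernoulli_mgf_le p hp0 hp1 t
    have h2 : (p * Real.exp t + (1 - p)) ^ n ≤ (Real.exp (p * t + t ^ 2 / 8)) ^ n := by
      apply pow_le_pow_left₀ _ h1
      have := Real.exp_pos t
      nlinarith
    rwa [← Real.exp_nat_mul] at h2
  have hεinv : ε⁻¹ = ENNReal.ofReal (Real.exp (-(t * (n * (p + s))))) := by
    rw [hεdef, ← ENNReal.ofReal_inv_of_pos (Real.exp_pos _), ← Real.exp_neg]
  calc ε⁻¹ * ENNReal.ofReal ((p * Real.exp t + (1 - p)) ^ n)
      ≤ ε⁻¹ * ENNReal.ofReal (Real.exp ((n : ℝ) * (p * t + t ^ 2 / 8))) :=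
        mul_le_mul_right (ENNReal.ofReal_le_ofReal hbase) _
    _ = ENNReal.ofReal (Real.exp (-(t * (n * (p + s)))) *
          Real.exp ((n : ℝ) * (p * t + t ^ 2 / 8))) := by
        rw [hεinv, ← ENNReal.ofReal_mul (Real.exp_pos _).le]
    _ = ENNReal.ofReal (Real.exp (-2 * n * s ^ 2)) := by
        rw [← Real.exp_add]
        congr 1
        rw [htdef]; ring




lemma toReal_emp {X : Type*} [MeasurableSpace X] {n : ℕ} (hn : 0 < n) {S : Set X}
    (hS : MeasurableSet S) (x : Fin n → X) :
    (empMeasure x S).toReal = (∑ i, ind S (x i)) / n := by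
  have h1 : empMeasure x S = (n : ENNReal)⁻¹ * ∑ i, S.indicator (fun _ => (1:ENNReal)) (x i) := by
    rw [empMeasure, Measure.smul_apply, smul_eq_mul, Measure.finset_sum_apply]
    congr 1
    exact Finset.sum_congr rfl fun i _ => Measure.dirac_apply' (x i) hS
  rw [h1, ENNReal.toReal_mul]
  have h2 : ((n : ENNReal)⁻¹).toReal = (n : ℝ)⁻¹ := by
    rw [ENNReal.toReal_inv]; simp
  have h3 : (∑ i, S.indicator (fun _ => (1:ENNReal)) (x i)).toReal = ∑ i, ind S (x i) := by
    rw [ENNReal.toReal_sum]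
    · exact Finset.sum_congr rfl fun i _ => by
        by_cases h : x i ∈ S <;> simp [ind, h]
    · intro i _
      by_cases h : x i ∈ S <;> simp [h]
  rw [h2, h3, inv_mul_eq_div]

lemma sum_ind_nonneg {X : Type*} {n : ℕ} (S : Set X) (x : Fin n → X) :
    0 ≤ ∑ i, ind S (x i) :=
  Finset.sum_nonneg fun i _ => by by_cases h : x i ∈ S <;> simp [ind, h]

lemma sum_ind_le {X : Type*} {n : ℕ} (S : Set X) (x : Fin n → X) :
    ∑ i, ind S (x i) ≤ n := by
  calc ∑ i, ind S (x i) ≤ ∑ _i : Fin n, (1:ℝ) :=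
        Finset.sum_le_sum fun i _ => by by_cases h : x i ∈ S <;> simp [ind, h]
    _ = n := by simp

lemma sum_ind_compl {X : Type*} {n : ℕ} (S : Set X) (x : Fin n → X) :
    ∑ i, ind Sᶜ (x i) = n - ∑ i, ind S (x i) := by
  have : ∀ i : Fin n, ind Sᶜ (x i) = 1 - ind S (x i) := fun i => by
    by_cases h : x i ∈ S <;> simp [ind, h]
  rw [Finset.sum_congr rfl fun i _ => this i, Finset.sum_sub_distrib]
  simp



lemma chernoff_two {X : Type*} [MeasurableSpace X] (D : Measure X) [IsProbabilityMeasure D]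
    (S : Set X) (hS : MeasurableSet S) (n : ℕ) (hn : 0 < n) (s : ℝ) (hs : 0 < s) :
    (Measure.pi fun _ : Fin n => D)
      {x | s ≤ |(∑ i, ind S (x i)) / n - (D S).toReal|} ≤
    ENNReal.ofReal (2 * Real.exp (-2 * n * s ^ 2)) := by
  set p := (D S).toReal with hpdef
  have hn' : (0:ℝ) < n := by exact_mod_cast hn
  have hpc : (D Sᶜ).toReal = 1 - p := by
    rw [measure_compl hS (measure_ne_top D S)]
    rw [measure_univ, ENNReal.toReal_sub_of_le prob_le_one ENNReal.one_ne_top]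
    simp
    rfl
  have hsub : {x : Fin n → X | s ≤ |(∑ i, ind S (x i)) / n - p|} ⊆
      {x | p + s ≤ (∑ i, ind S (x i)) / n} ∪
      {x | (D Sᶜ).toReal + s ≤ (∑ i, ind Sᶜ (x i)) / n} := by
    intro x hx
    simp only [Set.mem_setOf_eq, Set.mem_union] at hx ⊢
    rcases le_abs.1 hx with h | h
    · left; linarith
    · right
      rw [hpc, sum_ind_compl]
      have h1 : (∑ i, ind S (x i)) / n ≤ p - s := by linarith
      have h2 : ∑ i, ind S (x i) ≤ (p - s) * n := (div_le_iff₀ hn').1 h1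
      rw [le_div_iff₀ hn']
      push_cast
      linarith
  calc (Measure.pi fun _ : Fin n => D) {x | s ≤ |(∑ i, ind S (x i)) / n - p|}
      ≤ (Measure.pi fun _ : Fin n => D) ({x | p + s ≤ (∑ i, ind S (x i)) / n} ∪
          {x | (D Sᶜ).toReal + s ≤ (∑ i, ind Sᶜ (x i)) / n}) := measure_mono hsub
    _ ≤ (Measure.pi fun _ : Fin n => D) {x | p + s ≤ (∑ i, ind S (x i)) / n} +
        (Measure.pi fun _ : Fin n => D)
          {x | (D Sᶜ).toReal + s ≤ (∑ i, ind Sᶜ (x i)) / n} := measure_union_le _ _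
    _ ≤ ENNReal.ofReal (Real.exp (-2 * n * s ^ 2)) +
        ENNReal.ofReal (Real.exp (-2 * n * s ^ 2)) :=
          add_le_add (chernoff_up D S hS n hn s hs) (chernoff_up D Sᶜ hS.compl n hn s hs)
    _ = ENNReal.ofReal (2 * Real.exp (-2 * n * s ^ 2)) := by
        rw [← ENNReal.ofReal_add (Real.exp_pos _).le (Real.exp_pos _).le]
        congr 1; ring


lemma emp_toReal_le_one {X : Type*} [MeasurableSpace X] {n : ℕ} (hn : 0 < n)
    (x : Fin n → X) (S : Set X) : (empMeasure x S).toReal ≤ 1 := by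
  have huniv : empMeasure x Set.univ = 1 := by
    rw [empMeasure, Measure.smul_apply, smul_eq_mul, Measure.finset_sum_apply]
    simp only [measure_univ]
    rw [Finset.sum_const, Finset.card_univ, Fintype.card_fin, nsmul_eq_mul, mul_one]
    exact ENNReal.inv_mul_cancel (by exact_mod_cast hn.ne') (ENNReal.natCast_ne_top n)
  have h1 : empMeasure x S ≤ 1 := huniv ▸ measure_mono (Set.subset_univ S)
  exact ENNReal.toReal_le_of_le_ofReal zero_le_one (by simpa using h1)

lemma emp_tail {X : Type*} [MeasurableSpace X] (D : Measure X) [IsProbabilityMeasure D]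
    (S : Set X) (hS : MeasurableSet S) (n : ℕ) (hn : 0 < n) (s : ℝ) (hs : 0 < s)
    (d2 : ℝ) (hδ2 : 2 * Real.exp (-2 * n * s ^ 2) ≤ d2) :
    (Measure.pi fun _ : Fin n => D)
      {x | s ≤ |(empMeasure x S).toReal - (D S).toReal|} ≤ ENNReal.ofReal d2 := by
  have hset : {x : Fin n → X | s ≤ |(empMeasure x S).toReal - (D S).toReal|} =
      {x | s ≤ |(∑ i, ind S (x i)) / n - (D S).toReal|} := by
    ext x; rw [Set.mem_setOf_eq, Set.mem_setOf_eq, toReal_emp hn hS]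
  rw [hset]
  exact (chernoff_two D S hS n hn s hs).trans
    (ENNReal.ofReal_le_ofReal hδ2)


set_option maxHeartbeats 2000000 in
/-- Theorem 1 of the paper: if the support collection of `HΔH` has VC dimension at
most `d`, and `f ∈ H` is the labeling function, then with probability at least
`1 - δ` over `n` i.i.d. samples from each of `D_A`, `D_B`, simultaneously for all
`h ∈ H`,
`|ε_{D_A}(h,f) − ε_{D_B}(h,f)| ≤ ½ d_{HΔH}(D̂_A, D̂_B) + 2 √((d log(2n) + log(2/δ))/n)`. -/
theorem perf_gap_bound {X : Type*} [MeasurableSpace X]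
    (DA DB : Measure X) [IsProbabilityMeasure DA] [IsProbabilityMeasure DB]
    (H : Set (X → Bool)) (hH : ∀ h ∈ H, Measurable h)
    (d : ℕ)
    (hVC : VCDimLE {S | ∃ g ∈ symDiffClass H, S = support01 g} d)
    (f : X → Bool) (hf : f ∈ H)
    (n : ℕ) (hn : 0 < n) (δ : ℝ) (hδ : δ ∈ Set.Ioo (0 : ℝ) 1) :
    ENNReal.ofReal (1 - δ) ≤
      ((Measure.pi fun _ : Fin n => DA).prod (Measure.pi fun _ : Fin n => DB))
        {p : (Fin n → X) × (Fin n → X) |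
          ∀ h ∈ H,
            |risk DA h f - risk DB h f| ≤
              (1 / 2) * Gdiv (symDiffClass H) (empMeasure p.1) (empMeasure p.2) +
                2 * Real.sqrt ((d * Real.log (2 * n) + Real.log (2 / δ)) / n)} := by
  obtain ⟨hδ0, hδ1⟩ := hδ
  have hn' : (0:ℝ) < n := by exact_mod_cast hn
  have hn1 : (1:ℝ) ≤ n := by exact_mod_cast hn
  -- numeric constants
  have hlog2n : 0 ≤ Real.log (2 * (n:ℝ)) := Real.log_nonneg (by linarith)
  have hlogδ : 0 < Real.log (2 / δ) := Real.log_pos (by rw [lt_div_iff₀ hδ0]; linarith)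
  have hdlog : (0:ℝ) ≤ (d : ℝ) * Real.log (2 * (n:ℝ)) :=
    mul_nonneg (Nat.cast_nonneg d) hlog2n
  obtain ⟨c, hcdef⟩ : ∃ c : ℝ,
      c = ((d : ℝ) * Real.log (2 * (n:ℝ)) + Real.log (2 / δ)) / n := ⟨_, rfl⟩
  have hc : 0 < c := by rw [hcdef]; exact div_pos (by linarith) hn'
  have hnc : Real.log (2 / δ) ≤ (n:ℝ) * c := by
    have hval : (n:ℝ) * c = (d : ℝ) * Real.log (2 * (n:ℝ)) + Real.log (2 / δ) := by
      rw [hcdef]; field_simp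
    rw [hval]; linarith
  obtain ⟨L4, hL4def⟩ : ∃ L4 : ℝ, L4 = Real.log (4 / δ) := ⟨_, rfl⟩
  have hL4pos : 0 < L4 := by
    rw [hL4def]; exact Real.log_pos (by rw [lt_div_iff₀ hδ0]; linarith)
  have hL4lt : L4 < 2 * ((n:ℝ) * c) := by
    have h1 : (4:ℝ)/δ < 4/δ^2 := by
      rw [div_lt_div_iff₀ hδ0 (by positivity)]; nlinarith
    have h2 : Real.log (4/δ) < Real.log (4/δ^2) := Real.log_lt_log (by positivity) h1
    have h3 : Real.log (((2:ℝ)/δ)^2) = 2 * Real.log (2/δ) := by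
      rw [Real.log_pow]; push_cast; ring
    have h4 : ((2:ℝ)/δ)^2 = 4/δ^2 := by ring
    rw [h4] at h3
    rw [hL4def]
    linarith
  obtain ⟨γ, hγdef⟩ : ∃ γ : ℝ, γ = c - L4 / (2*n) := ⟨_, rfl⟩
  have h2npos : (0:ℝ) < 2*n := by linarith
  have hγpos : 0 < γ := by
    have : L4/(2*n) < c := by rw [div_lt_iff₀ h2npos]; nlinarith
    rw [hγdef]; linarith
  have hγltc : γ < c := by
    have : 0 < L4/(2*n) := by positivity
    rw [hγdef]; linarith
  obtain ⟨sq, hsqdef⟩ : ∃ sq : ℝ, sq = Real.sqrt c := ⟨_, rfl⟩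
  have hsqpos : 0 < sq := by rw [hsqdef]; exact Real.sqrt_pos.2 hc
  have hsqsq : sq ^ 2 = c := by rw [hsqdef]; exact Real.sq_sqrt hc.le
  obtain ⟨ε, hεdef⟩ : ∃ ε : ℝ, ε = γ / sq := ⟨_, rfl⟩
  have hεpos : 0 < ε := by rw [hεdef]; exact div_pos hγpos hsqpos
  have hεlt : ε < sq := by
    rw [hεdef, div_lt_iff₀ hsqpos]; nlinarith
  obtain ⟨s, hsdef⟩ : ∃ s : ℝ, s = sq - ε / 2 := ⟨_, rfl⟩
  have hspos : 0 < s := by rw [hsdef]; linarith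
  have hsqε : sq * ε = γ := by rw [hεdef]; field_simp
  have h2ns2 : L4 ≤ 2 * n * s ^ 2 := by
    have hs2 : c - γ ≤ s^2 := by rw [hsdef]; nlinarith [sq_nonneg ε]
    have hcγ : c - γ = L4/(2*n) := by rw [hγdef]; ring
    rw [hcγ] at hs2
    have := (div_le_iff₀ h2npos).1 hs2
    nlinarith
  have htail : 2 * Real.exp (-2 * n * s^2) ≤ δ/2 := by
    have h1 : Real.exp (-2*n*s^2) ≤ Real.exp (-L4) :=
      Real.exp_le_exp.2 (by linarith)
    have h2 : Real.exp (-L4) = δ/4 := by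
      rw [hL4def, ← Real.log_inv, Real.exp_log (by positivity), inv_div]
    rw [h2] at h1; linarith
  -- rewrite the square root in the goal
  have hgoalsq : Real.sqrt ((d * Real.log (2 * n) + Real.log (2 / δ)) / n) = sq := by
    rw [hsqdef, hcdef]
  rw [hgoalsq]
  -- risks are in [0,1]
  have risk01 : ∀ (E : Measure X), IsProbabilityMeasure E → ∀ h : X → Bool,
      0 ≤ risk E h f ∧ risk E h f ≤ 1 := by
    intro E hE h
    refine ⟨ENNReal.toReal_nonneg, ?_⟩
    have h1 : E {x | h x ≠ f x} ≤ E Set.univ := measure_mono (Set.subset_univ _)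
    have h2 := ENNReal.toReal_mono (measure_ne_top E Set.univ) h1
    simpa [risk, measure_univ] using h2
  -- the near-maximizing hypothesis
  set RS : Set ℝ := {v | ∃ h ∈ H, v = |risk DA h f - risk DB h f|} with hRSdef
  have hRSne : RS.Nonempty := ⟨|risk DA f f - risk DB f f|, f, hf, rfl⟩
  have hRSbdd : BddAbove RS := by
    refine ⟨1, fun v hv => ?_⟩
    obtain ⟨h, hh, rfl⟩ := hv
    obtain ⟨ha0, ha1⟩ := risk01 DA inferInstance h
    obtain ⟨hb0, hb1⟩ := risk01 DB inferInstance h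
    rw [abs_le]; constructor <;> linarith
  obtain ⟨r, hrdef⟩ : ∃ r : ℝ, r = sSup RS := ⟨_, rfl⟩
  obtain ⟨v, hvmem, hvgt⟩ := exists_lt_of_lt_csSup hRSne
    (show r - ε < sSup RS by rw [← hrdef]; linarith)
  obtain ⟨hst, hstH, hveq⟩ := hvmem
  subst hveq
  set Sd : Set X := {x | hst x ≠ f x} with hSddef
  have hSdmeas : MeasurableSet Sd := by
    have h1 : Measurable fun x => (hst x, f x) := (hH hst hstH).prodMk (hH f hf)
    have h2 : Sd = (fun x => (hst x, f x)) ⁻¹' {q : Bool × Bool | q.1 ≠ q.2} := by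
      ext x; simp [hSddef]
    rw [h2]
    exact h1 (Set.Finite.measurableSet (Set.toFinite _))
  have hsupp : support01 (fun x => Bool.xor (hst x) (f x)) = Sd := by
    ext x
    simp only [support01, Set.mem_preimage, Set.mem_singleton_iff, hSddef,
      Set.mem_setOf_eq]
    cases hst x <;> cases f x <;> simp
  obtain ⟨pA, hpAdef⟩ : ∃ pA : ℝ, pA = (DA Sd).toReal := ⟨_, rfl⟩
  obtain ⟨pB, hpBdef⟩ : ∃ pB : ℝ, pB = (DB Sd).toReal := ⟨_, rfl⟩
  have h3A : risk DA hst f = pA := by rw [hpAdef]; rfl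
  have h3B : risk DB hst f = pB := by rw [hpBdef]; rfl
  -- bad events
  set badA : Set (Fin n → X) := {x | s ≤ |(empMeasure x Sd).toReal - pA|} with hbadAdef
  set badB : Set (Fin n → X) := {x | s ≤ |(empMeasure x Sd).toReal - pB|} with hbadBdef
  have hbadAbound : (Measure.pi fun _ : Fin n => DA) badA ≤ ENNReal.ofReal (δ/2) := by
    rw [hbadAdef, hpAdef]
    exact emp_tail DA Sd hSdmeas n hn s hspos (δ/2) htail
  have hbadBbound : (Measure.pi fun _ : Fin n => DB) badB ≤ ENNReal.ofReal (δ/2) := by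
    rw [hbadBdef, hpBdef]
    exact emp_tail DB Sd hSdmeas n hn s hspos (δ/2) htail
  have hmeasemp : Measurable fun x : Fin n → X => (empMeasure x Sd).toReal := by
    have h1 : (fun x : Fin n → X => (empMeasure x Sd).toReal) =
        fun x => (∑ i, ind Sd (x i)) / n := by
      funext x; exact toReal_emp hn hSdmeas x
    rw [h1]
    exact (Finset.measurable_sum Finset.univ fun i _ =>
      (measurable_ind hSdmeas).comp (measurable_pi_apply i)).div_const _
  have hmeasA : MeasurableSet badA :=
    measurableSet_le measurable_const ((hmeasemp.sub_const pA).abs)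
  have hmeasB : MeasurableSet badB :=
    measurableSet_le measurable_const ((hmeasemp.sub_const pB).abs)
  set bad : Set ((Fin n → X) × (Fin n → X)) :=
    (Prod.fst ⁻¹' badA) ∪ (Prod.snd ⁻¹' badB) with hbaddef
  have hbadmeas : MeasurableSet bad :=
    (hmeasA.preimage measurable_fst).union (hmeasB.preimage measurable_snd)
  set μ := ((Measure.pi fun _ : Fin n => DA).prod (Measure.pi fun _ : Fin n => DB)) with hμdef
  have hbadbound : μ bad ≤ ENNReal.ofReal δ := by
    have e1 : μ (Prod.fst ⁻¹' badA) ≤ ENNReal.ofReal (δ/2) := by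
      rw [hμdef, ← Set.prod_univ, Measure.prod_prod, measure_univ, mul_one]
      exact hbadAbound
    have e2 : μ (Prod.snd ⁻¹' badB) ≤ ENNReal.ofReal (δ/2) := by
      rw [hμdef, ← Set.univ_prod, Measure.prod_prod, measure_univ, one_mul]
      exact hbadBbound
    calc μ bad ≤ μ (Prod.fst ⁻¹' badA) + μ (Prod.snd ⁻¹' badB) := measure_union_le _ _
      _ ≤ ENNReal.ofReal (δ/2) + ENNReal.ofReal (δ/2) := add_le_add e1 e2
      _ = ENNReal.ofReal δ := by
          rw [← ENNReal.ofReal_add (by linarith) (by linarith)]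
          norm_num
  -- the good event implies the desired inequality
  have hEsub : badᶜ ⊆ {p : (Fin n → X) × (Fin n → X) |
      ∀ h ∈ H,
        |risk DA h f - risk DB h f| ≤
          (1 / 2) * Gdiv (symDiffClass H) (empMeasure p.1) (empMeasure p.2) +
            2 * sq} := by
    intro p hp
    simp only [hbaddef, Set.compl_union, Set.mem_inter_iff, Set.mem_compl_iff,
      Set.mem_preimage, hbadAdef, hbadBdef, Set.mem_setOf_eq, not_le] at hp
    obtain ⟨hgA, hgB⟩ := hp
    intro h hh
    have h1 : |risk DA h f - risk DB h f| ≤ r := by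
      rw [hrdef]; exact le_csSup hRSbdd ⟨h, hh, rfl⟩
    have h2 : r < |pA - pB| + ε := by rw [← h3A, ← h3B]; linarith
    obtain ⟨eA, heAdef⟩ : ∃ eA : ℝ, eA = (empMeasure p.1 Sd).toReal := ⟨_, rfl⟩
    obtain ⟨eB, heBdef⟩ : ∃ eB : ℝ, eB = (empMeasure p.2 Sd).toReal := ⟨_, rfl⟩
    rw [← heAdef] at hgA
    rw [← heBdef] at hgB
    have h4 : |pA - pB| ≤ |eA - eB| + (|eA - pA| + |eB - pB|) := by
      have t1 : |pA - pB| ≤ |pA - eA| + |eA - pB| := abs_sub_le pA eA pB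
      have t2 : |eA - pB| ≤ |eA - eB| + |eB - pB| := abs_sub_le eA eB pB
      have t3 : |pA - eA| = |eA - pA| := abs_sub_comm pA eA
      linarith
    have h5 : |eA - eB| ≤ ⨆ g : (symDiffClass H),
        |(empMeasure p.1 (support01 (g : X → Bool))).toReal -
          (empMeasure p.2 (support01 (g : X → Bool))).toReal| := by
      have hbdd2 : BddAbove (Set.range fun g : (symDiffClass H) =>
          |(empMeasure p.1 (support01 (g : X → Bool))).toReal -
            (empMeasure p.2 (support01 (g : X → Bool))).toReal|) := by
        refine ⟨1, fun w hw => ?_⟩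
        obtain ⟨g, rfl⟩ := hw
        have a1 := emp_toReal_le_one hn p.1 (support01 (g : X → Bool))
        have a2 := emp_toReal_le_one hn p.2 (support01 (g : X → Bool))
        have a3 : (0:ℝ) ≤ (empMeasure p.1 (support01 (g : X → Bool))).toReal :=
          ENNReal.toReal_nonneg
        have a4 : (0:ℝ) ≤ (empMeasure p.2 (support01 (g : X → Bool))).toReal :=
          ENNReal.toReal_nonneg
        rw [abs_le]; constructor <;> linarith
      have hmem : (fun x => Bool.xor (hst x) (f x)) ∈ symDiffClass H :=
        ⟨hst, hstH, f, hf, rfl⟩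
      have hle := le_ciSup hbdd2
        (⟨fun x => Bool.xor (hst x) (f x), hmem⟩ : (symDiffClass H))
      simp only [hsupp] at hle
      rw [heAdef, heBdef]
      exact hle
    have h6 : (1 / 2) * Gdiv (symDiffClass H) (empMeasure p.1) (empMeasure p.2) =
        ⨆ g : (symDiffClass H),
          |(empMeasure p.1 (support01 (g : X → Bool))).toReal -
            (empMeasure p.2 (support01 (g : X → Bool))).toReal| := by
      rw [Gdiv]; ring
    show |risk DA h f - risk DB h f| ≤
      (1 / 2) * Gdiv (symDiffClass H) (empMeasure p.1) (empMeasure p.2) + 2 * sq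
    rw [h6]
    linarith
  -- conclude
  calc ENNReal.ofReal (1 - δ) = 1 - ENNReal.ofReal δ := by
        rw [ENNReal.ofReal_sub 1 hδ0.le, ENNReal.ofReal_one]
    _ ≤ 1 - μ bad := tsub_le_tsub_left hbadbound 1
    _ = μ badᶜ := by
        rw [measure_compl hbadmeas (measure_ne_top _ _), measure_univ]
    _ ≤ _ := measure_mono hEsub
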